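/- Relabelling the right-hand vertices of K_{3,3} by an affine bijection conjugates one face-tracing permutation into another whose orientation values are unchanged: for any a ∈ ℤˣ and b ∈ ZMod 3, let φ : ZMod 3 ≃ ZMod 3 be the bijection φ j = (a : ℤ) • j + b, and let R_φ : D ≃ D be the dart relabelling R_φ (i, j, t) = (i, φ j, t). Then R_φ ∘ F(ε_L, ε_R) ∘ R_φ⁻¹ = F(a • ε_L, ε_R ∘ φ⁻¹), where a • ε_L denotes the pointwise product i ↦ a * ε_L i. In particular the cycle type of the face-tracing permutation depends only on the pair of values of ε_L and ε_R. -/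

import Mathlib

/-- The dart type of `K_{3,3}`: `(i, j, true)` is the directed edge from left-vertex `i`
to right-vertex `j`, and `(i, j, false)` the directed edge from right-vertex `j`
to left-vertex `i`. -/
abbrev Dart : Type := ZMod 3 × ZMod 3 × Bool

/-- The value of an orientation `ε : ZMod 3 → ℤˣ`: the absolute value of the
sum of the orientations `±1` of the three vertices of one part of `K_{3,3}`. -/
def value (ε : ZMod 3 → ℤˣ) : ℕ := (∑ i : ZMod 3, (ε i : ℤ)).natAbs

/-- The face-tracing permutation of the darts of `K_{3,3}` determined by the
rotation scheme `(εL, εR)`, implementing the rotation rule. -/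
def faceTracing (εL εR : ZMod 3 → ℤˣ) : Equiv.Perm Dart where
  toFun := fun d => match d with
    | (i, j, true) => (i + ((εR j : ℤ) : ZMod 3), j, false)
    | (i, j, false) => (i, j + ((εL i : ℤ) : ZMod 3), true)
  invFun := fun d => match d with
    | (i, j, false) => (i - ((εR j : ℤ) : ZMod 3), j, true)
    | (i, j, true) => (i, j - ((εL i : ℤ) : ZMod 3), false)
  left_inv := by rintro ⟨i, j, _ | _⟩ <;> simp
  right_inv := by rintro ⟨i, j, _ | _⟩ <;> simp

/-- Relabelling the right-hand vertices of `K_{3,3}` by the affine bijection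
`φ j = a • j + b` conjugates the face-tracing permutation of the scheme `(εL, εR)`
into the face-tracing permutation of the scheme `(a • εL, εR ∘ φ⁻¹)`, whose
orientation values are unchanged; in particular the cycle type of the face-tracing
permutation is unchanged. -/
theorem k33_relabel_conj (εL εR : ZMod 3 → ℤˣ) (a : ℤˣ) (b : ZMod 3)
    (φ : ZMod 3 ≃ ZMod 3) (hφ : ∀ j : ZMod 3, φ j = (a : ℤ) • j + b)
    (Rφ : Equiv.Perm Dart) (hR : ∀ d : Dart, Rφ d = (d.1, φ d.2.1, d.2.2)) :
    Rφ * faceTracing εL εR * Rφ⁻¹ =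
      faceTracing (fun i => a * εL i) (fun j => εR (φ.symm j)) ∧
    (faceTracing (fun i => a * εL i) (fun j => εR (φ.symm j))).cycleType =
      (faceTracing εL εR).cycleType := by
  have hRinv : ∀ d : Dart, Rφ⁻¹ d = (d.1, φ.symm d.2.1, d.2.2) := by
    intro d
    apply Rφ.injective
    rw [Equiv.Perm.coe_inv, Equiv.apply_symm_apply, hR]
    simp
  have h1 : Rφ * faceTracing εL εR * Rφ⁻¹ =
      faceTracing (fun i => a * εL i) (fun j => εR (φ.symm j)) := by
    refine Equiv.Perm.ext fun d => ?_
    rcases d with ⟨i, j, _ | _⟩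
    · simp only [Equiv.Perm.mul_apply, hRinv, hR, faceTracing, Equiv.coe_fn_mk]
      refine Prod.ext rfl (Prod.ext ?_ rfl)
      have h1 := hφ (φ.symm j + ((εL i : ℤ) : ZMod 3))
      have h2 := hφ (φ.symm j)
      rw [Equiv.apply_symm_apply] at h2
      show φ (φ.symm j + ((εL i : ℤ) : ZMod 3)) = j + (((a * εL i : ℤˣ) : ℤ) : ZMod 3)
      rw [h1, smul_add, add_right_comm, ← h2]
      rw [zsmul_eq_mul]
      push_cast
      ring
    · simp only [Equiv.Perm.mul_apply, hRinv, hR, faceTracing, Equiv.coe_fn_mk]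
      exact Prod.ext rfl (Prod.ext (Equiv.apply_symm_apply φ j) rfl)
  exact ⟨h1, by rw [← h1, Equiv.Perm.cycleType_conj]⟩
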